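/- The only functions p in R_1 that attain the value 0 at two distinct angles and the value 1 at two distinct angles (per period) are p(θ) = (1 - cos(θ - θ_0))(1 + cos(θ - θ_0)) = sin²(θ - θ_0), for θ_0 ∈ [0, π). -/

import Mathlib

open Real

/-- `p` is a real trigonometric polynomial of degree at most 2. -/
def IsTrigPoly2 (p : ℝ → ℝ) : Prop :=
  ∃ c0 c1 s1 c2 s2 : ℝ, ∀ θ : ℝ,
    p θ = c0 + c1 * Real.cos θ + s1 * Real.sin θ
      + c2 * Real.cos (2 * θ) + s2 * Real.sin (2 * θ)

section Aux

open Polynomial Complex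

lemma double_root_dvd {P : Polynomial ℂ} {u : ℂ} (h0 : P.eval u = 0)
    (h1 : P.derivative.eval u = 0) : (X - C u) ^ 2 ∣ P := by
  obtain ⟨Q, hQ⟩ := (Polynomial.dvd_iff_isRoot (p := P) (a := u)).2 h0
  have hQu : Q.eval u = 0 := by
    have h2 := congrArg (fun q => Polynomial.eval u (Polynomial.derivative q)) hQ
    simp [Polynomial.derivative_mul, h1] at h2
    simpa using h2.symm
  obtain ⟨R, hR⟩ := (Polynomial.dvd_iff_isRoot (p := Q) (a := u)).2 hQu
  exact ⟨R, by rw [hQ, hR]; ring⟩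

lemma factor4 {P : Polynomial ℂ} (hP : P ≠ 0) (hdeg : P.natDegree ≤ 4) {u v : ℂ} (huv : u ≠ v)
    (hu0 : P.eval u = 0) (hu1 : P.derivative.eval u = 0)
    (hv0 : P.eval v = 0) (hv1 : P.derivative.eval v = 0) :
    ∃ c : ℂ, c ≠ 0 ∧ P = C c * ((X - C u) ^ 2 * (X - C v) ^ 2) := by
  have d1 := double_root_dvd hu0 hu1
  have d2 := double_root_dvd hv0 hv1
  have hcop : IsCoprime ((X - C u) ^ 2) ((X - C v) ^ 2) :=
    (Polynomial.isCoprime_X_sub_C_of_isUnit_sub ((sub_ne_zero.2 huv).isUnit)).pow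
  obtain ⟨R, hR⟩ := hcop.mul_dvd d1 d2
  have hmonF : ((X - C u) ^ 2 * (X - C v) ^ 2).Monic :=
    ((monic_X_sub_C u).pow 2).mul ((monic_X_sub_C v).pow 2)
  have hF0 : ((X - C u) ^ 2 * (X - C v) ^ 2) ≠ 0 := hmonF.ne_zero
  have hFd : ((X - C u) ^ 2 * (X - C v) ^ 2).natDegree = 4 := by
    rw [natDegree_mul (pow_ne_zero _ (X_sub_C_ne_zero u)) (pow_ne_zero _ (X_sub_C_ne_zero v)),
      natDegree_pow, natDegree_pow, natDegree_X_sub_C, natDegree_X_sub_C]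
  have hR0 : R ≠ 0 := by rintro rfl; simp at hR; exact hP hR
  have hnd : P.natDegree = 4 + R.natDegree := by
    rw [hR, natDegree_mul hF0 hR0, hFd]
  have hRd : R.natDegree = 0 := by omega
  obtain ⟨c, rfl⟩ := Polynomial.natDegree_eq_zero.1 hRd
  have hc : c ≠ 0 := by rintro rfl; simp at hR; exact hP hR
  exact ⟨c, hc, by rw [hR]; ring⟩

noncomputable def TP (c0 c1 s1 c2 s2 : ℝ) : Polynomial ℂ :=
  C (((c2 : ℂ) + s2 * I) / 2) + C (((c1 : ℂ) + s1 * I) / 2) * X + C (c0 : ℂ) * X ^ 2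
    + C (((c1 : ℂ) - s1 * I) / 2) * X ^ 3 + C (((c2 : ℂ) - s2 * I) / 2) * X ^ 4

lemma exp_two (θ : ℝ) : Complex.exp ((2 * θ : ℝ) * I) = Complex.exp (θ * I) ^ 2 := by
  rw [show ((2 * θ : ℝ) : ℂ) * I = θ * I + θ * I by push_cast; ring, Complex.exp_add]; ring

lemma eval_TP (c0 c1 s1 c2 s2 θ : ℝ) :
    (TP c0 c1 s1 c2 s2).eval (Complex.exp (θ * I)) =
      Complex.exp (θ * I) ^ 2 *
        ((c0 + c1 * Real.cos θ + s1 * Real.sin θ + c2 * Real.cos (2 * θ)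
          + s2 * Real.sin (2 * θ) : ℝ) : ℂ) := by
  have hz : Complex.exp ((θ:ℝ) * I) ≠ 0 := Complex.exp_ne_zero _
  have e1 : Complex.exp (-((θ:ℝ) * I)) = (Complex.exp ((θ:ℝ) * I))⁻¹ := Complex.exp_neg _
  have e2 := exp_two θ
  have e3 : Complex.exp (-((2 * θ : ℝ) * I)) = (Complex.exp ((θ:ℝ) * I) ^ 2)⁻¹ := by
    rw [Complex.exp_neg, e2]
  push_cast [Complex.ofReal_cos, Complex.ofReal_sin]
  simp only [TP, Complex.cos, Complex.sin, eval_add, eval_mul, eval_pow, eval_X, eval_C]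
  rw [show (-(θ:ℂ)) * I = -(((θ:ℝ):ℂ) * I) by ring,
    show (-(2 * (θ:ℂ))) * I = -(((2 * θ : ℝ) : ℂ) * I) by push_cast; ring,
    show (2:ℂ) * (θ:ℝ) * I = ((2 * θ : ℝ) : ℂ) * I by push_cast; ring]
  rw [e1, e2, e3]
  field_simp
  ring

set_option maxHeartbeats 1000000 in
lemma eval_TP_deriv (c0 c1 s1 c2 s2 θ : ℝ) :
    Complex.exp (θ * I) * (TP c0 c1 s1 c2 s2).derivative.eval (Complex.exp (θ * I)) =
      Complex.exp (θ * I) ^ 2 *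
        (2 * ((c0 + c1 * Real.cos θ + s1 * Real.sin θ + c2 * Real.cos (2 * θ)
          + s2 * Real.sin (2 * θ) : ℝ) : ℂ)
        - I * ((-c1 * Real.sin θ + s1 * Real.cos θ - 2 * c2 * Real.sin (2 * θ)
          + 2 * s2 * Real.cos (2 * θ) : ℝ) : ℂ)) := by
  have hz : Complex.exp ((θ:ℝ) * I) ≠ 0 := Complex.exp_ne_zero _
  have e1 : Complex.exp (-((θ:ℝ) * I)) = (Complex.exp ((θ:ℝ) * I))⁻¹ := Complex.exp_neg _
  have e2 := exp_two θ
  have e3 : Complex.exp (-((2 * θ : ℝ) * I)) = (Complex.exp ((θ:ℝ) * I) ^ 2)⁻¹ := by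
    rw [Complex.exp_neg, e2]
  push_cast [Complex.ofReal_cos, Complex.ofReal_sin]
  simp only [TP, Complex.cos, Complex.sin, derivative_add, derivative_mul, derivative_C,
    derivative_X, derivative_X_pow, eval_add, eval_mul, eval_pow, eval_X, eval_C, eval_zero,
    eval_one]
  rw [show (-(θ:ℂ)) * I = -(((θ:ℝ):ℂ) * I) by ring,
    show (-(2 * (θ:ℂ))) * I = -(((2 * θ : ℝ) : ℂ) * I) by push_cast; ring,
    show (2:ℂ) * (θ:ℝ) * I = ((2 * θ : ℝ) : ℂ) * I by push_cast; ring]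
  rw [e1, e2, e3]
  field_simp
  ring_nf
  simp only [Complex.I_sq]
  ring_nf

lemma exp_inj_Ico {a b : ℝ} (ha : a ∈ Set.Ico 0 (2 * Real.pi))
    (hb : b ∈ Set.Ico 0 (2 * Real.pi))
    (h : Complex.exp (a * I) = Complex.exp (b * I)) : a = b := by
  rw [Complex.exp_eq_exp_iff_exists_int] at h
  obtain ⟨n, hn⟩ := h
  have h2 : ((a : ℂ)) = ((b + n * (2 * Real.pi) : ℝ) : ℂ) := by
    have := mul_right_cancel₀ Complex.I_ne_zero
      (hn.trans (by push_cast; ring : ((b : ℂ)) * I + n * (2 * Real.pi * I)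
        = ((b + n * (2 * Real.pi) : ℝ) : ℂ) * I))
    exact this
  have h3 : a = b + n * (2 * Real.pi) := Complex.ofReal_inj.1 h2
  have hpi := Real.pi_pos
  have hn0 : n = 0 := by
    rcases lt_trichotomy n 0 with hlt | heq | hgt
    · have hle : n ≤ -1 := by omega
      have : (n : ℝ) ≤ -1 := by exact_mod_cast hle
      nlinarith [ha.1, ha.2, hb.1, hb.2]
    · exact heq
    · have hge : (1:ℤ) ≤ n := by omega
      have : (1 : ℝ) ≤ n := by exact_mod_cast hge
      nlinarith [ha.1, ha.2, hb.1, hb.2]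
  rw [hn0] at h3; simpa using h3

lemma coeffs_eq {A B E D F : ℂ}
    (h : C A * X ^ 4 + C B * X ^ 3 + C E * X ^ 2 + C D * X + C F = (X : Polynomial ℂ) ^ 2) :
    A = 0 ∧ B = 0 ∧ E = 1 ∧ D = 0 ∧ F = 0 := by
  refine ⟨?_, ?_, ?_, ?_, ?_⟩
  · simpa using congrArg (fun q => Polynomial.coeff q 4) h
  · simpa using congrArg (fun q => Polynomial.coeff q 3) h
  · simpa using congrArg (fun q => Polynomial.coeff q 2) h
  · simpa using congrArg (fun q => Polynomial.coeff q 1) h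
  · simpa using congrArg (fun q => Polynomial.coeff q 0) h

end Aux

open Polynomial Complex in
set_option maxHeartbeats 2000000 in
/-- If `p ∈ R₁` attains the value `0` at two distinct angles of `[0, 2π)` and the value `1`
at two distinct angles of `[0, 2π)`, then `p(θ) = sin²(θ - θ₀)` for some `θ₀ ∈ [0, π)`. -/
theorem stmt10 (p : ℝ → ℝ) (hp : IsTrigPoly2 p)
    (hb : ∀ θ : ℝ, p θ ∈ Set.Icc (0 : ℝ) 1)
    (θa θb θc θd : ℝ)
    (hamem : θa ∈ Set.Ico (0 : ℝ) (2 * Real.pi)) (hbmem : θb ∈ Set.Ico (0 : ℝ) (2 * Real.pi))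
    (hcmem : θc ∈ Set.Ico (0 : ℝ) (2 * Real.pi)) (hdmem : θd ∈ Set.Ico (0 : ℝ) (2 * Real.pi))
    (hab : θa ≠ θb) (hcd : θc ≠ θd)
    (h0a : p θa = 0) (h0b : p θb = 0) (h1c : p θc = 1) (h1d : p θd = 1) :
    ∃ θ₀ ∈ Set.Ico (0 : ℝ) Real.pi, ∀ θ : ℝ, p θ = Real.sin (θ - θ₀) ^ 2 := by
  obtain ⟨c0, c1, s1, c2, s2, hp5⟩ := hp
  -- derivative of p
  have hder : ∀ t : ℝ, HasDerivAt p
      (-c1 * Real.sin t + s1 * Real.cos t - 2 * c2 * Real.sin (2 * t)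
        + 2 * s2 * Real.cos (2 * t)) t := by
    intro t
    have hf : p = fun θ => c0 + c1 * Real.cos θ + s1 * Real.sin θ + c2 * Real.cos (2 * θ)
        + s2 * Real.sin (2 * θ) := funext hp5
    rw [hf]
    have h1 : HasDerivAt (fun θ : ℝ => Real.cos (2 * θ)) (-Real.sin (2 * t) * 2) t := by
      simpa [Function.comp_def] using
        (Real.hasDerivAt_cos (2 * t)).comp t ((hasDerivAt_id t).const_mul 2)
    have h2 : HasDerivAt (fun θ : ℝ => Real.sin (2 * θ)) (Real.cos (2 * t) * 2) t := by
      simpa [Function.comp_def] using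
        (Real.hasDerivAt_sin (2 * t)).comp t ((hasDerivAt_id t).const_mul 2)
    have h3 := ((((hasDerivAt_const t c0).add
      ((Real.hasDerivAt_cos t).const_mul c1)).add
      ((Real.hasDerivAt_sin t).const_mul s1)).add
      (h1.const_mul c2)).add (h2.const_mul s2)
    exact h3.congr_deriv (by ring)
  -- derivative vanishes at the four points
  have hDa : -c1 * Real.sin θa + s1 * Real.cos θa - 2 * c2 * Real.sin (2 * θa)
      + 2 * s2 * Real.cos (2 * θa) = 0 := by
    have hmin : IsLocalMin p θa := Filter.Eventually.of_forall
      (fun y => by rw [h0a]; exact (hb y).1)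
    exact ((hder θa).deriv).symm.trans hmin.deriv_eq_zero
  have hDb : -c1 * Real.sin θb + s1 * Real.cos θb - 2 * c2 * Real.sin (2 * θb)
      + 2 * s2 * Real.cos (2 * θb) = 0 := by
    have hmin : IsLocalMin p θb := Filter.Eventually.of_forall
      (fun y => by rw [h0b]; exact (hb y).1)
    exact ((hder θb).deriv).symm.trans hmin.deriv_eq_zero
  have hDc : -c1 * Real.sin θc + s1 * Real.cos θc - 2 * c2 * Real.sin (2 * θc)
      + 2 * s2 * Real.cos (2 * θc) = 0 := by
    have hmax : IsLocalMax p θc := Filter.Eventually.of_forall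
      (fun y => by rw [h1c]; exact (hb y).2)
    exact ((hder θc).deriv).symm.trans hmax.deriv_eq_zero
  have hDd : -c1 * Real.sin θd + s1 * Real.cos θd - 2 * c2 * Real.sin (2 * θd)
      + 2 * s2 * Real.cos (2 * θd) = 0 := by
    have hmax : IsLocalMax p θd := Filter.Eventually.of_forall
      (fun y => by rw [h1d]; exact (hb y).2)
    exact ((hder θd).deriv).symm.trans hmax.deriv_eq_zero
  -- complex polynomial
  set P : Polynomial ℂ := TP c0 c1 s1 c2 s2 with hPdef
  set u : ℂ := Complex.exp (θa * Complex.I) with hu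
  set v : ℂ := Complex.exp (θb * Complex.I) with hv
  set w : ℂ := Complex.exp (θc * Complex.I) with hw
  set x : ℂ := Complex.exp (θd * Complex.I) with hx
  have hu0 : u ≠ 0 := Complex.exp_ne_zero _
  have hv0 : v ≠ 0 := Complex.exp_ne_zero _
  have hw0 : w ≠ 0 := Complex.exp_ne_zero _
  have hx0 : x ≠ 0 := Complex.exp_ne_zero _
  have huv : u ≠ v := fun h => hab (exp_inj_Ico hamem hbmem h)
  have hwx : w ≠ x := fun h => hcd (exp_inj_Ico hcmem hdmem h)
  -- evaluation facts
  have hvala : ∀ t : ℝ, P.eval (Complex.exp (t * Complex.I))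
      = Complex.exp (t * Complex.I) ^ 2 * ((p t : ℝ) : ℂ) := by
    intro t
    rw [hPdef, eval_TP, ← hp5 t]
  have hvald : ∀ t : ℝ, p t = 0 ∨ p t = 1 →
      (-c1 * Real.sin t + s1 * Real.cos t - 2 * c2 * Real.sin (2 * t)
        + 2 * s2 * Real.cos (2 * t) = 0) →
      Complex.exp (t * Complex.I) * P.derivative.eval (Complex.exp (t * Complex.I))
        = Complex.exp (t * Complex.I) ^ 2 * (2 * ((p t : ℝ) : ℂ)) := by
    intro t _ hD
    rw [hPdef, eval_TP_deriv, ← hp5 t, hD]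
    push_cast
    ring
  have hPu : P.eval u = 0 := by rw [hu, hvala θa, h0a]; simp
  have hPv : P.eval v = 0 := by rw [hv, hvala θb, h0b]; simp
  have hPw : P.eval w = w ^ 2 := by rw [hw, hvala θc, h1c]; simp
  have hPx : P.eval x = x ^ 2 := by rw [hx, hvala θd, h1d]; simp
  have hP'u : P.derivative.eval u = 0 := by
    have := hvald θa (Or.inl h0a) hDa
    rw [h0a] at this
    simp only [Complex.ofReal_zero, mul_zero] at this
    exact (mul_eq_zero.1 this).resolve_left hu0
  have hP'v : P.derivative.eval v = 0 := by
    have := hvald θb (Or.inl h0b) hDb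
    rw [h0b] at this
    simp only [Complex.ofReal_zero, mul_zero] at this
    exact (mul_eq_zero.1 this).resolve_left hv0
  have hP'w : P.derivative.eval w = 2 * w := by
    have := hvald θc (Or.inr h1c) hDc
    rw [h1c] at this
    have h2 : w * P.derivative.eval w = w * (2 * w) := by
      rw [this]; push_cast; ring
    exact mul_left_cancel₀ hw0 h2
  have hP'x : P.derivative.eval x = 2 * x := by
    have := hvald θd (Or.inr h1d) hDd
    rw [h1d] at this
    have h2 : x * P.derivative.eval x = x * (2 * x) := by
      rw [this]; push_cast; ring
    exact mul_left_cancel₀ hx0 h2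
  -- degrees and nonvanishing
  have hPdeg : P.natDegree ≤ 4 := by
    rw [hPdef, TP]
    compute_degree
  have hPne : P ≠ 0 := by
    intro h
    rw [h] at hPw
    simp at hPw
    exact hw0 (sq_eq_zero_iff.1 hPw.symm)
  obtain ⟨c, hc0, hcP⟩ := factor4 hPne hPdeg huv hPu hP'u hPv hP'v
  -- the polynomial X^2 - P
  set Q : Polynomial ℂ := X ^ 2 - P with hQdef
  have hQw : Q.eval w = 0 := by simp [hQdef, hPw]
  have hQx : Q.eval x = 0 := by simp [hQdef, hPx]
  have hQ'w : Q.derivative.eval w = 0 := by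
    simp [hQdef, derivative_sub, derivative_X_pow, hP'w]
    ring
  have hQ'x : Q.derivative.eval x = 0 := by
    simp [hQdef, derivative_sub, derivative_X_pow, hP'x]
    ring
  have hQne : Q ≠ 0 := by
    intro h
    have : Q.eval u = 0 := by rw [h]; simp
    rw [hQdef] at this
    simp [hPu] at this
    exact hu0 this
  have hQdeg : Q.natDegree ≤ 4 := by
    refine le_trans (Polynomial.natDegree_sub_le _ _) ?_
    simp only [natDegree_X_pow]
    omega
  obtain ⟨d, hd0, hdQ⟩ := factor4 hQne hQdeg hwx hQw hQ'w hQx hQ'x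
  -- the master identity
  have hiden : C (c + d) * X ^ 4 + C (c * (-(2 * (u + v))) + d * (-(2 * (w + x)))) * X ^ 3
      + C (c * (u ^ 2 + 4 * u * v + v ^ 2) + d * (w ^ 2 + 4 * w * x + x ^ 2)) * X ^ 2
      + C (c * (-(2 * u * v * (u + v))) + d * (-(2 * w * x * (w + x)))) * X
      + C (c * (u ^ 2 * v ^ 2) + d * (w ^ 2 * x ^ 2)) = (X : Polynomial ℂ) ^ 2 := by
    have hQ2 : (X : Polynomial ℂ) ^ 2 - P = C d * ((X - C w) ^ 2 * (X - C x) ^ 2) := hdQ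
    simp only [map_add, map_mul, map_neg, map_ofNat, map_pow]
    linear_combination -hcP - hQ2
  obtain ⟨hE4, hE3, hE2, hE1, hE0⟩ := coeffs_eq hiden
  -- algebra on the coefficients
  have hdc : d = -c := by linear_combination hE4
  subst hdc
  have hsum : u + v = w + x := by
    have h3 : c * 2 * ((w + x) - (u + v)) = 0 := by linear_combination hE3
    rcases mul_eq_zero.1 h3 with h | h
    · rcases mul_eq_zero.1 h with h' | h'
      · exact absurd h' hc0
      · norm_num at h'
    · exact (sub_eq_zero.1 h).symm
  have hkey : c * (2 * (u * v - w * x)) = 1 := by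
    linear_combination hE2 - c * (u + v + w + x) * hsum
  have hne : u * v - w * x ≠ 0 := by
    intro h
    rw [h] at hkey; simp at hkey
  have hwxuv : w * x = -(u * v) := by
    have h0 : c * ((u * v - w * x) * (u * v + w * x)) = 0 := by linear_combination hE0
    rcases mul_eq_zero.1 h0 with h | h
    · exact absurd h hc0
    · have := (mul_eq_zero.1 h).resolve_left hne
      linear_combination this
  have hs0 : u + v = 0 := by
    have h1 : c * (u * v - w * x) * (u + v) * (-2) = 0 := by
      linear_combination hE1 + 2 * c * w * x * hsum
    rcases mul_eq_zero.1 h1 with h | h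
    · rcases mul_eq_zero.1 h with h' | h'
      · rcases mul_eq_zero.1 h' with h'' | h''
        · exact absurd h'' hc0
        · exact absurd h'' hne
      · exact h'
    · norm_num at h
  have hveq : v = -u := by linear_combination hs0
  have hwx2 : w * x = u ^ 2 := by
    rw [hveq] at hwxuv; linear_combination hwxuv
  have hcu : c * (4 * u ^ 2) = -1 := by
    rw [hveq, hwx2] at hkey; linear_combination -hkey
  have hcval : c = -(1 / (4 * u ^ 2)) := by
    field_simp
    linear_combination hcu
  -- final formula
  have hform : ∀ θ : ℝ, p θ = Real.sin (θ - θa) ^ 2 := by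
    intro θ
    have hz0 : Complex.exp ((θ : ℝ) * Complex.I) ≠ 0 := Complex.exp_ne_zero _
    set z : ℂ := Complex.exp ((θ : ℝ) * Complex.I) with hz
    have h1 : z ^ 2 * ((p θ : ℝ) : ℂ) = c * (z - u) ^ 2 * (z + u) ^ 2 := by
      rw [← hvala θ, hcP, hveq]
      simp only [eval_mul, eval_pow, eval_sub, eval_add, eval_X, eval_C, map_neg, eval_neg]
      ring
    have hzu : Complex.exp (((θ : ℂ) - (θa : ℂ)) * Complex.I) = z * u⁻¹ := by
      rw [sub_mul, Complex.exp_sub, hz, hu, div_eq_mul_inv]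
    have hIs : ∀ y : ℂ, (y * Complex.I / 2) ^ 2 = -(y ^ 2) / 4 := by
      intro y; rw [div_pow, mul_pow, Complex.I_sq]; ring
    have h2 : z ^ 2 * ((Real.sin (θ - θa) ^ 2 : ℝ) : ℂ) = c * (z - u) ^ 2 * (z + u) ^ 2 := by
      push_cast [Complex.ofReal_sin]
      rw [Complex.sin]
      rw [show (-((θ : ℂ) - (θa : ℂ))) * Complex.I = -(((θ : ℂ) - (θa : ℂ)) * Complex.I) by ring,
        Complex.exp_neg, hzu, hIs, hcval]
      field_simp
      ring
    have h3 := mul_left_cancel₀ (pow_ne_zero 2 hz0) (h1.trans h2.symm)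
    exact_mod_cast h3
  by_cases hlt : θa < Real.pi
  · exact ⟨θa, ⟨hamem.1, hlt⟩, hform⟩
  · refine ⟨θa - Real.pi, ⟨by linarith [not_lt.1 hlt], by linarith [hamem.2]⟩, ?_⟩
    intro θ
    rw [hform θ]
    rw [show θ - (θa - Real.pi) = (θ - θa) + Real.pi by ring, Real.sin_add, Real.cos_pi,
      Real.sin_pi]
    ring
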